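/- Let α, β be odd integers and n, m ≥ 1 with n = 2m. Then the polynomial f(x) = 2ⁿ + 2ᵐβx + αx² is irreducible both as a polynomial in ℤ₂[x] and as an element of ℤ[[x]]. -/

import Mathlib

private lemma two_prime' : Prime (2 : ℤ_[2]) := by
  have := PadicInt.prime_p (p := 2); simpa using this

private lemma two_not_dvd_one' : ¬ (2:ℤ_[2]) ∣ 1 := fun h =>
  two_prime'.not_unit (isUnit_of_dvd_one h)

private lemma padicFourNe : (4:ℤ_[2]) ≠ 0 := by
  have h22 : (4:ℤ_[2]) = 2 * 2 := by norm_num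
  rw [h22]
  exact mul_ne_zero two_prime'.ne_zero two_prime'.ne_zero

private lemma even_or' (z : ℤ_[2]) : (2:ℤ_[2]) ∣ z ∨ (2:ℤ_[2]) ∣ (z - 1) := by
  have hker := PadicInt.ker_toZMod (p := 2)
  have hmem : ∀ w : ℤ_[2], (2:ℤ_[2]) ∣ w ↔ PadicInt.toZMod w = 0 := by
    intro w
    rw [← Ideal.mem_span_singleton]
    have : w ∈ Ideal.span {(2:ℤ_[2])} ↔ w ∈ RingHom.ker (PadicInt.toZMod (p := 2)) := by
      rw [hker, PadicInt.maximalIdeal_eq_span_p]; norm_num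
    rw [this, RingHom.mem_ker]
  rcases (by decide : ∀ x : ZMod 2, x = 0 ∨ x = 1) (PadicInt.toZMod z) with h | h
  · left; exact (hmem z).2 h
  · right; exact (hmem _).2 (by simp [map_sub, h])

/-- key arithmetic fact: `t² ≠ β² - 4α + 8w` in `ℤ₂` for odd integers `α β`. -/
private lemma key' (t w : ℤ_[2]) (a b : ℤ) (ha : Odd a) (hb : Odd b) :
    t^2 ≠ (b:ℤ_[2])^2 - 4*(a:ℤ_[2]) + 8*w := by
  intro h
  obtain ⟨j, hj⟩ := ha
  obtain ⟨k, hk⟩ := hb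
  have hbc : (b:ℤ_[2]) = 2*(k:ℤ_[2]) + 1 := by rw [hk]; push_cast; ring
  have hac : (a:ℤ_[2]) = 2*(j:ℤ_[2]) + 1 := by rw [hj]; push_cast; ring
  -- k(k+1) is even
  obtain ⟨k2, hk2⟩ : (2:ℤ_[2]) ∣ (k:ℤ_[2]) * ((k:ℤ_[2]) + 1) := by
    rcases even_or' (k:ℤ_[2]) with ⟨c, hc⟩ | ⟨c, hc⟩
    · exact ⟨c * ((k:ℤ_[2])+1), by rw [hc]; ring⟩
    · exact ⟨(k:ℤ_[2]) * (c+1), by linear_combination (k:ℤ_[2]) * hc⟩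
  apply two_not_dvd_one'
  rcases even_or' t with ⟨v, hv⟩ | ⟨s, hs⟩
  · refine ⟨2*v^2 + 4*(j:ℤ_[2]) + 2 - 4*k2 - 4*w, ?_⟩
    have h' : (2*v)^2 = (2*(k:ℤ_[2])+1)^2 - 4*(2*(j:ℤ_[2])+1) + 8*w := by
      rw [← hv, ← hbc, ← hac]; exact h
    linear_combination -h' - 4*hk2
  · have hts : t = 2*s + 1 := by linear_combination hs
    obtain ⟨r, hr⟩ : (2:ℤ_[2]) ∣ s * (s + 1) := by
      rcases even_or' s with ⟨c, hc⟩ | ⟨c, hc⟩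
      · exact ⟨c * (s+1), by rw [hc]; ring⟩
      · exact ⟨s * (c+1), by linear_combination s * hc⟩
    refine ⟨k2 - (j:ℤ_[2]) + w - r, ?_⟩
    have h' : (2*s+1)^2 = (2*(k:ℤ_[2])+1)^2 - 4*(2*(j:ℤ_[2])+1) + 8*w := by
      rw [← hts, ← hbc, ← hac]; exact h
    have h4 : (4:ℤ_[2]) * 1 = 4 * (2 * (k2 - (j:ℤ_[2]) + w - r)) := by
      linear_combination h' - 4*hr + 4*hk2
    exact mul_left_cancel₀ padicFourNe h4

private lemma pow_split' : ∀ (m : ℕ) (s c : ℤ_[2]), s^2 = 2^(2*m) * c →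
    ∃ t, s = 2^m * t ∧ t^2 = c := by
  intro m
  induction m with
  | zero => exact fun s c h => ⟨s, by simp, by simpa using h⟩
  | succ m ih =>
    intro s c h
    obtain ⟨s1, hs1⟩ : (2:ℤ_[2]) ∣ s := by
      apply two_prime'.dvd_of_dvd_pow (n := 2)
      exact ⟨2^(2*m+1) * c, by rw [h]; ring⟩
    have hp : (2:ℤ_[2])^(2*(m+1)) = 4 * 2^(2*m) := by
      rw [show 2*(m+1) = 2*m + 2 by ring, pow_add]; ring
    have h' : s1^2 = 2^(2*m) * c := by
      refine mul_left_cancel₀ padicFourNe ?_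
      have hh : (2*s1)^2 = 2^(2*(m+1)) * c := by rw [← hs1]; exact h
      linear_combination hh + c * hp
    obtain ⟨t, ht1, ht2⟩ := ih s1 c h'
    exact ⟨t, by rw [hs1, ht1]; ring, ht2⟩

private lemma odd_isUnit' (a : ℤ) (ha : Odd a) : IsUnit ((a : ℤ_[2])) := by
  by_contra hu
  obtain ⟨j, hj⟩ := ha
  have hmax : IsLocalRing.maximalIdeal ℤ_[2] = Ideal.span {(2:ℤ_[2])} := by
    have := PadicInt.maximalIdeal_eq_span_p (p := 2); simpa using this
  have hdvd : (2:ℤ_[2]) ∣ (a : ℤ_[2]) := by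
    rwa [← Ideal.mem_span_singleton, ← hmax,
      IsLocalRing.mem_maximalIdeal, mem_nonunits_iff]
  obtain ⟨c, hc⟩ := hdvd
  apply two_not_dvd_one'
  refine ⟨c - (j:ℤ_[2]), ?_⟩
  have hcast : ((2*j+1 : ℤ) : ℤ_[2]) = 2 * c := by rw [← hj]; exact_mod_cast hc
  push_cast at hcast
  linear_combination hcast

theorem stmt_16 (α β : ℤ) (hα : Odd α) (hβ : Odd β) (n m : ℕ)
    (hn : 1 ≤ n) (hm : 1 ≤ m) (hnm : n = 2 * m) :
    Irreducible (Polynomial.C ((2 : ℤ_[2]) ^ n) +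
      Polynomial.C ((2 : ℤ_[2]) ^ m * (β : ℤ_[2])) * Polynomial.X +
      Polynomial.C (α : ℤ_[2]) * Polynomial.X ^ 2) ∧
    Irreducible ((PowerSeries.C : ℤ →+* PowerSeries ℤ) ((2 : ℤ) ^ n) +
      (PowerSeries.C : ℤ →+* PowerSeries ℤ) ((2 : ℤ) ^ m * β) * PowerSeries.X +
      (PowerSeries.C : ℤ →+* PowerSeries ℤ) α * PowerSeries.X ^ 2) := by
  subst hnm
  constructor
  · -- polynomial over ℤ_[2]
    set A : ℤ_[2] := (α : ℤ_[2]) with hA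
    set B : ℤ_[2] := (β : ℤ_[2]) with hB
    have hAu : IsUnit A := odd_isUnit' α hα
    have hA0 : A ≠ 0 := hAu.ne_zero
    set f : Polynomial ℤ_[2] := Polynomial.C ((2 : ℤ_[2]) ^ (2*m)) +
      Polynomial.C ((2 : ℤ_[2]) ^ m * B) * Polynomial.X +
      Polynomial.C A * Polynomial.X ^ 2 with hf
    have hfq : f = Polynomial.C A * Polynomial.X ^ 2 +
        Polynomial.C ((2 : ℤ_[2]) ^ m * B) * Polynomial.X +
        Polynomial.C ((2 : ℤ_[2]) ^ (2*m)) := by rw [hf]; ring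
    have hdeg : f.natDegree = 2 := by rw [hfq]; exact Polynomial.natDegree_quadratic hA0
    have hf0 : f ≠ 0 := fun h0 => by simp [h0] at hdeg
    constructor
    · intro hu
      have := Polynomial.natDegree_eq_zero_of_isUnit hu
      omega
    · intro g h hgh
      have hg0 : g ≠ 0 := fun h0 => hf0 (by rw [hgh, h0, zero_mul])
      have hh0 : h ≠ 0 := fun h0 => hf0 (by rw [hgh, h0, mul_zero])
      have hdsum : g.natDegree + h.natDegree = 2 := by
        rw [← Polynomial.natDegree_mul hg0 hh0, ← hgh, hdeg]
      have c0 : f.coeff 0 = 2 ^ (2*m) := by simp [hf, -map_pow]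
      have c1 : f.coeff 1 = 2 ^ m * B := by simp [hf, -map_pow]
      have c2 : f.coeff 2 = A := by simp [hf, -map_pow]
      rcases (by omega : g.natDegree = 0 ∨ h.natDegree = 0 ∨
          (g.natDegree = 1 ∧ h.natDegree = 1)) with hd | hd | ⟨hdg, hdh⟩
      · left
        have hgC := Polynomial.eq_C_of_natDegree_eq_zero hd
        have h2 : f.coeff 2 = g.coeff 0 * h.coeff 2 := by
          conv_lhs => rw [hgh, hgC]
          rw [Polynomial.coeff_C_mul]
        have hmul : IsUnit (g.coeff 0 * h.coeff 2) := by rw [← h2, c2]; exact hAu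
        rw [hgC, Polynomial.isUnit_C]
        exact isUnit_of_mul_isUnit_left hmul
      · right
        have hhC := Polynomial.eq_C_of_natDegree_eq_zero hd
        have h2 : f.coeff 2 = h.coeff 0 * g.coeff 2 := by
          conv_lhs => rw [hgh, hhC]
          rw [Polynomial.coeff_mul_C, mul_comm]
        have hmul : IsUnit (h.coeff 0 * g.coeff 2) := by rw [← h2, c2]; exact hAu
        rw [hhC, Polynomial.isUnit_C]
        exact isUnit_of_mul_isUnit_left hmul
      · exfalso
        have e0 : g.coeff 0 * h.coeff 0 = 2 ^ (2*m) := by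
          have h0' : (g*h).coeff 0 = 2 ^ (2*m) := by rw [← hgh]; exact c0
          rwa [Polynomial.mul_coeff_zero] at h0'
        have e1 : g.coeff 0 * h.coeff 1 + g.coeff 1 * h.coeff 0 = 2 ^ m * B := by
          have h1' : (g*h).coeff 1 = 2 ^ m * B := by rw [← hgh]; exact c1
          rw [Polynomial.coeff_mul, Finset.Nat.sum_antidiagonal_eq_sum_range_succ_mk] at h1'
          simpa [Finset.sum_range_succ] using h1'
        have hg2 : g.coeff 2 = 0 := Polynomial.coeff_eq_zero_of_natDegree_lt (by omega)
        have hh2 : h.coeff 2 = 0 := Polynomial.coeff_eq_zero_of_natDegree_lt (by omega)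
        have e2 : g.coeff 1 * h.coeff 1 = A := by
          have h2' : (g*h).coeff 2 = A := by rw [← hgh]; exact c2
          rw [Polynomial.coeff_mul, Finset.Nat.sum_antidiagonal_eq_sum_range_succ_mk] at h2'
          simp [Finset.sum_range_succ, hg2, hh2] at h2'
          linear_combination h2'
        have hpow : ((2:ℤ_[2]) ^ m) ^ 2 = 2 ^ (2*m) := by
          rw [← pow_mul, mul_comm]
        have hs : (g.coeff 0 * h.coeff 1 - g.coeff 1 * h.coeff 0) ^ 2
            = 2 ^ (2*m) * (B^2 - 4*A + 8*0) := by
          linear_combination (g.coeff 0 * h.coeff 1 + g.coeff 1 * h.coeff 0 + 2^m*B) * e1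
            + B^2 * hpow - 4 * (g.coeff 1 * h.coeff 1) * e0 - 4 * (2:ℤ_[2])^(2*m) * e2
        obtain ⟨t, ht1, ht2⟩ := pow_split' m _ _ hs
        exact key' t 0 α β hα hβ ht2
  · -- power series over ℤ
    set F : PowerSeries ℤ := (PowerSeries.C : ℤ →+* PowerSeries ℤ) ((2 : ℤ) ^ (2*m)) +
      (PowerSeries.C : ℤ →+* PowerSeries ℤ) ((2 : ℤ) ^ m * β) * PowerSeries.X +
      (PowerSeries.C : ℤ →+* PowerSeries ℤ) α * PowerSeries.X ^ 2 with hF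
    have hc0 : PowerSeries.constantCoeff (R := ℤ) F = 2 ^ (2*m) := by
      rw [hF]
      simp only [map_add, map_mul, map_pow, PowerSeries.constantCoeff_C,
        PowerSeries.constantCoeff_X]
      ring
    have two_dvd : (2:ℤ) ∣ 2 ^ (2*m) := dvd_pow_self 2 (by omega)
    constructor
    · intro hu
      have := PowerSeries.isUnit_constantCoeff F hu
      rw [hc0] at this
      rcases Int.isUnit_iff.1 this with h1 | h1 <;> rw [h1] at two_dvd <;> omega
    · intro g h hgh
      have e0 : PowerSeries.constantCoeff (R := ℤ) g * PowerSeries.constantCoeff (R := ℤ) h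
          = 2 ^ (2*m) := by
        rw [← hc0, hgh, map_mul]
      by_cases hgu : (2:ℤ) ∣ PowerSeries.constantCoeff (R := ℤ) g
      · by_cases hhu : (2:ℤ) ∣ PowerSeries.constantCoeff (R := ℤ) h
        · exfalso
          obtain ⟨g0, hg0⟩ := hgu
          obtain ⟨h0, hh0⟩ := hhu
          have e1 : PowerSeries.constantCoeff (R := ℤ) g * (PowerSeries.coeff (R := ℤ) 1) h +
              (PowerSeries.coeff (R := ℤ) 1) g * PowerSeries.constantCoeff (R := ℤ) h = 2 ^ m * β := by
            have h1 : (PowerSeries.coeff (R := ℤ) 1) F = 2 ^ m * β := by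
              rw [hF]
              simp only [map_add, PowerSeries.coeff_C, PowerSeries.coeff_C_mul,
                PowerSeries.coeff_X, PowerSeries.coeff_X_pow]
              norm_num
            rw [hgh, PowerSeries.coeff_mul,
              Finset.Nat.sum_antidiagonal_eq_sum_range_succ_mk] at h1
            simp [Finset.sum_range_succ] at h1
            linear_combination h1
          have e2 : PowerSeries.constantCoeff (R := ℤ) g * (PowerSeries.coeff (R := ℤ) 2) h +
              (PowerSeries.coeff (R := ℤ) 1) g * (PowerSeries.coeff (R := ℤ) 1) h +
              (PowerSeries.coeff (R := ℤ) 2) g * PowerSeries.constantCoeff (R := ℤ) h = α := by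
            have h2 : (PowerSeries.coeff (R := ℤ) 2) F = α := by
              rw [hF]
              simp only [map_add, PowerSeries.coeff_C, PowerSeries.coeff_C_mul,
                PowerSeries.coeff_X, PowerSeries.coeff_X_pow]
              norm_num
            rw [hgh, PowerSeries.coeff_mul,
              Finset.Nat.sum_antidiagonal_eq_sum_range_succ_mk] at h2
            simp [Finset.sum_range_succ] at h2
            linear_combination h2
          set G0 : ℤ_[2] := ((PowerSeries.constantCoeff (R := ℤ) g : ℤ) : ℤ_[2]) with hG0
          set G1 : ℤ_[2] := (((PowerSeries.coeff (R := ℤ) 1) g : ℤ) : ℤ_[2]) with hG1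
          set G2 : ℤ_[2] := (((PowerSeries.coeff (R := ℤ) 2) g : ℤ) : ℤ_[2]) with hG2
          set H0 : ℤ_[2] := ((PowerSeries.constantCoeff (R := ℤ) h : ℤ) : ℤ_[2]) with hH0
          set H1 : ℤ_[2] := (((PowerSeries.coeff (R := ℤ) 1) h : ℤ) : ℤ_[2]) with hH1
          set H2 : ℤ_[2] := (((PowerSeries.coeff (R := ℤ) 2) h : ℤ) : ℤ_[2]) with hH2
          have E0 : G0 * H0 = 2 ^ (2*m) := by
            rw [hG0, hH0]; exact_mod_cast congrArg (fun z : ℤ => (z : ℤ_[2])) e0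
          have E1 : G0 * H1 + G1 * H0 = 2 ^ m * (β:ℤ_[2]) := by
            rw [hG0, hH0, hG1, hH1]; exact_mod_cast congrArg (fun z : ℤ => (z : ℤ_[2])) e1
          have E2 : G0 * H2 + G1 * H1 + G2 * H0 = (α:ℤ_[2]) := by
            rw [hG0, hH0, hG1, hH1, hG2, hH2]
            exact_mod_cast congrArg (fun z : ℤ => (z : ℤ_[2])) e2
          have EG0 : G0 = 2 * (g0 : ℤ_[2]) := by
            rw [hG0]; exact_mod_cast congrArg (fun z : ℤ => (z : ℤ_[2])) hg0
          have EH0 : H0 = 2 * (h0 : ℤ_[2]) := by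
            rw [hH0]; exact_mod_cast congrArg (fun z : ℤ => (z : ℤ_[2])) hh0
          have hpow : ((2:ℤ_[2]) ^ m) ^ 2 = 2 ^ (2*m) := by
            rw [← pow_mul, mul_comm]
          have hs : (G0 * H1 - G1 * H0) ^ 2
              = 2 ^ (2*m) * ((β:ℤ_[2])^2 - 4*(α:ℤ_[2])
                  + 8 * ((g0:ℤ_[2]) * H2 + G2 * (h0:ℤ_[2]))) := by
            linear_combination (G0*H1 + G1*H0 + 2^m*(β:ℤ_[2])) * E1 + (β:ℤ_[2])^2 * hpow
              - 4*(G1*H1)*E0 - 4*(2:ℤ_[2])^(2*m)*E2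
              + 4*(2:ℤ_[2])^(2*m)*H2*EG0 + 4*(2:ℤ_[2])^(2*m)*G2*EH0
          obtain ⟨t, ht1, ht2⟩ := pow_split' m _ _ hs
          exact key' t _ α β hα hβ ht2
        · right
          rw [PowerSeries.isUnit_iff_constantCoeff]
          have hcop : IsCoprime (PowerSeries.constantCoeff (R := ℤ) h) ((2:ℤ)^(2*m)) :=
            ((Int.prime_two.coprime_iff_not_dvd).2 hhu).symm.pow_right
          exact hcop.isUnit_of_dvd ⟨PowerSeries.constantCoeff (R := ℤ) g,
            by rw [← e0]; ring⟩
      · left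
        rw [PowerSeries.isUnit_iff_constantCoeff]
        have hcop : IsCoprime (PowerSeries.constantCoeff (R := ℤ) g) ((2:ℤ)^(2*m)) :=
          ((Int.prime_two.coprime_iff_not_dvd).2 hgu).symm.pow_right
        exact hcop.isUnit_of_dvd ⟨PowerSeries.constantCoeff (R := ℤ) h, e0.symm⟩
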